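/- Let Y be a real m×n matrix of rank r with a full singular value decomposition Y = U Σ Vᵀ, where U ∈ ℝ^{m×m} and V ∈ ℝ^{n×n} are orthogonal and Σ ∈ ℝ^{m×n} has the r nonzero singular values of Y in its first r diagonal positions and zeros elsewhere. Let ΔY be any real m×n matrix and set Γ = Uᵀ ΔY V, written in blocks Γ = [[Γ₁₁, Γ₁₂], [Γ₂₁, Γ₂₂]] with Γ₁₁ of size r×r. Define ΔY″ = U [[0, 0], [0, Γ₂₂]] Vᵀ and ΔY′ = ΔY − ΔY″. Then ‖Y‖_* − ‖Y + ΔY‖_* ≤ ‖ΔY′‖_* − ‖ΔY″‖_*. -/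

import Mathlib

open Matrix

open scoped MatrixOrder in
/-- Nuclear norm: trace of the psd square root of `Aᵀ * A`. -/
noncomputable def nuclearNorm {m n : Type*} [Fintype m] [Fintype n] [DecidableEq n]
    (A : Matrix m n ℝ) : ℝ :=
  (CFC.sqrt (Aᴴ * A)).trace

open scoped MatrixOrder in
/-- The psd square root, as a function of the psd proof. -/
noncomputable def Matrix.PosSemidef.sqrt {n : Type*} [Fintype n] [DecidableEq n]
    {M : Matrix n n ℝ} (hM : M.PosSemidef) : Matrix n n ℝ :=
  CFC.sqrt M

open scoped MatrixOrder in
lemma Matrix.PosSemidef.posSemidef_sqrt {n : Type*} [Fintype n] [DecidableEq n]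
    {M : Matrix n n ℝ} (hM : M.PosSemidef) : hM.sqrt.PosSemidef :=
  Matrix.nonneg_iff_posSemidef.mp (CFC.sqrt_nonneg M)

open scoped MatrixOrder in
lemma Matrix.PosSemidef.sqrt_mul_self {n : Type*} [Fintype n] [DecidableEq n]
    {M : Matrix n n ℝ} (hM : M.PosSemidef) : hM.sqrt * hM.sqrt = M :=
  CFC.sqrt_mul_sqrt_self M hM.nonneg

open scoped MatrixOrder in
lemma Matrix.PosSemidef.eq_sqrt_of_sq_eq {n : Type*} [Fintype n] [DecidableEq n]
    {B M : Matrix n n ℝ} (hB : B.PosSemidef) (hM : M.PosSemidef) (h : B ^ 2 = M) :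
    B = hM.sqrt :=
  (CFC.sqrt_unique (by rw [← pow_two]; exact h) hB.nonneg).symm

open scoped MatrixOrder in
lemma Matrix.PosSemidef.sqrt_spec {n : Type*} [Fintype n] [DecidableEq n]
    {M : Matrix n n ℝ} (hM : M.PosSemidef) : hM.sqrt =
      (hM.1.eigenvectorUnitary : Matrix n n ℝ) * diagonal (fun i => Real.sqrt (hM.1.eigenvalues i))
        * star (hM.1.eigenvectorUnitary : Matrix n n ℝ) := by
  unfold Matrix.PosSemidef.sqrt
  rw [CFC.sqrt_eq_cfc, cfc_nnreal_eq_real _ M hM.nonneg, hM.1.cfc_eq]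
  simp only [IsHermitian.cfc, Unitary.conjStarAlgAut_apply]
  congr 2
  congr 1
  funext i
  simp [Real.coe_sqrt, Real.coe_toNNReal', max_eq_left (hM.eigenvalues_nonneg i)]

lemma nuclearNorm_def {m n : Type*} [Fintype m] [Fintype n] [DecidableEq n]
    (A : Matrix m n ℝ) :
    nuclearNorm A = (Matrix.posSemidef_conjTranspose_mul_self A).sqrt.trace := rfl

set_option linter.unusedSectionVars false
set_option linter.unusedVariables false
set_option maxHeartbeats 1000000

section helpers
variable {m n : Type*} [Fintype m] [Fintype n] [DecidableEq m] [DecidableEq n]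

lemma sqrt_congr {M N : Matrix n n ℝ} (hM : M.PosSemidef) (hN : N.PosSemidef)
    (h : M = N) : hM.sqrt = hN.sqrt := by subst h; rfl

lemma nuclearNorm_congr {A B : Matrix m n ℝ} (h : Aᴴ * A = Bᴴ * B) :
    nuclearNorm A = nuclearNorm B := by
  simp only [nuclearNorm_def]
  rw [sqrt_congr (Matrix.posSemidef_conjTranspose_mul_self A)
    (Matrix.posSemidef_conjTranspose_mul_self B) h]

lemma nuclearNorm_neg (A : Matrix m n ℝ) : nuclearNorm (-A) = nuclearNorm A :=
  nuclearNorm_congr (by simp)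

lemma nuclearNorm_unitary (U : Matrix m m ℝ) (V : Matrix n n ℝ)
    (hU : Uᴴ * U = 1) (hV : Vᴴ * V = 1) (hV' : V * Vᴴ = 1) (A : Matrix m n ℝ) :
    nuclearNorm (U * A * Vᴴ) = nuclearNorm A := by
  have hP := Matrix.posSemidef_conjTranspose_mul_self A
  have h1 : (U * A * Vᴴ)ᴴ * (U * A * Vᴴ) = V * (Aᴴ * A) * Vᴴ := by
    simp only [conjTranspose_mul, conjTranspose_conjTranspose]
    calc V * (Aᴴ * Uᴴ) * (U * A * Vᴴ) = V * (Aᴴ * (Uᴴ * U) * (A * Vᴴ)) := by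
          simp only [Matrix.mul_assoc]
      _ = V * (Aᴴ * A) * Vᴴ := by rw [hU]; simp only [Matrix.mul_one, Matrix.mul_assoc]
  have hcandpos : (V * hP.sqrt * Vᴴ).PosSemidef :=
    hP.posSemidef_sqrt.mul_mul_conjTranspose_same V
  have hVAV : (V * (Aᴴ * A) * Vᴴ).PosSemidef := hP.mul_mul_conjTranspose_same V
  have hsq : (V * hP.sqrt * Vᴴ) ^ 2 = V * (Aᴴ * A) * Vᴴ := by
    rw [pow_two]
    calc V * hP.sqrt * Vᴴ * (V * hP.sqrt * Vᴴ)
        = V * hP.sqrt * (Vᴴ * V) * hP.sqrt * Vᴴ := by simp only [Matrix.mul_assoc]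
      _ = V * (hP.sqrt * hP.sqrt) * Vᴴ := by rw [hV]; simp only [Matrix.mul_one, Matrix.mul_assoc]
      _ = V * (Aᴴ * A) * Vᴴ := by rw [hP.sqrt_mul_self]
  have hkey : (Matrix.posSemidef_conjTranspose_mul_self (U * A * Vᴴ)).sqrt
      = V * hP.sqrt * Vᴴ := by
    rw [sqrt_congr _ hVAV h1]
    exact (hcandpos.eq_sqrt_of_sq_eq hVAV hsq).symm
  simp only [nuclearNorm_def]
  rw [hkey, Matrix.trace_mul_cycle, hV, Matrix.one_mul]

lemma trace_eq_sum_dot (M : Matrix n n ℝ) (V : Matrix n n ℝ) (hV : V * Vᴴ = 1) :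
    M.trace = ∑ j, (fun i => V i j) ⬝ᵥ (M *ᵥ fun i => V i j) := by
  have h : M.trace = (Vᴴ * M * V).trace := by
    rw [Matrix.trace_mul_cycle, hV, Matrix.one_mul]
  rw [h]
  apply Finset.sum_congr rfl
  intro j _
  show (Vᴴ * M * V) j j = _
  simp only [Matrix.mul_apply, conjTranspose_apply, star_trivial, dotProduct, Matrix.mulVec,
    Finset.sum_mul, Finset.mul_sum]
  rw [Finset.sum_comm]
  exact Finset.sum_congr rfl fun i _ => Finset.sum_congr rfl fun k _ => by ring

lemma nuclearNorm_eq_sum (A : Matrix m n ℝ) :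
    nuclearNorm A =
      ∑ j, Real.sqrt ((Matrix.posSemidef_conjTranspose_mul_self A).1.eigenvalues j) := by
  rw [nuclearNorm_def, Matrix.PosSemidef.sqrt_spec]
  rw [Matrix.trace_mul_cycle]
  rw [show (star ((Matrix.posSemidef_conjTranspose_mul_self A).1.eigenvectorUnitary : Matrix n n ℝ) *
      ((Matrix.posSemidef_conjTranspose_mul_self A).1.eigenvectorUnitary : Matrix n n ℝ)) = 1 from
    Unitary.coe_star_mul_self _]
  rw [Matrix.one_mul, Matrix.trace_diagonal]

lemma dot_mulVec_conjT (A : Matrix m n ℝ) (v : n → ℝ) (w : m → ℝ) :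
    v ⬝ᵥ (Aᴴ *ᵥ w) = (A *ᵥ v) ⬝ᵥ w := by
  rw [conjTranspose_eq_transpose_of_trivial, dotProduct_mulVec, vecMul_transpose]

lemma trace_le_nuclearNorm (A B : Matrix m n ℝ) (hB : (1 - Bᴴ * B).PosSemidef) :
    (Aᴴ * B).trace ≤ nuclearNorm A := by
  have hP := Matrix.posSemidef_conjTranspose_mul_self A
  have hH := hP.1
  set Vm : Matrix n n ℝ := (hH.eigenvectorUnitary : Matrix n n ℝ) with hVm
  have hVV : Vm * Vmᴴ = 1 := by
    simpa [Matrix.star_eq_conjTranspose, hVm] using Unitary.coe_mul_star_self hH.eigenvectorUnitary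
  rw [trace_eq_sum_dot _ Vm hVV, nuclearNorm_eq_sum]
  apply Finset.sum_le_sum
  intro j _
  set v : n → ℝ := fun i => Vm i j with hv
  have hvb : v = ⇑(hH.eigenvectorBasis j) := by
    ext i; simp [hv, hVm]
  have hvv : v ⬝ᵥ v = 1 := by
    have h1 : Vmᴴ * Vm = 1 := by
      simpa [Matrix.star_eq_conjTranspose, hVm] using Unitary.coe_star_mul_self hH.eigenvectorUnitary
    have := congrFun (congrFun h1 j) j
    simpa [Matrix.mul_apply, dotProduct, hv, Matrix.one_apply] using this
  have heig : (Aᴴ * A) *ᵥ v = hH.eigenvalues j • v := by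
    rw [hvb]
    simpa using hH.mulVec_eigenvectorBasis j
  have hAv : (A *ᵥ v) ⬝ᵥ (A *ᵥ v) = hH.eigenvalues j := by
    rw [← dot_mulVec_conjT A v (A *ᵥ v), mulVec_mulVec] at *
    rw [heig, dotProduct_smul, hvv]; simp
  have hBv : (B *ᵥ v) ⬝ᵥ (B *ᵥ v) ≤ 1 := by
    have := hB.dotProduct_mulVec_nonneg v
    simp only [Matrix.sub_mulVec, dotProduct_sub, Matrix.one_mulVec, star_trivial,
      sub_nonneg] at this
    calc (B *ᵥ v) ⬝ᵥ (B *ᵥ v) = v ⬝ᵥ ((Bᴴ * B) *ᵥ v) := by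
          rw [← mulVec_mulVec, dot_mulVec_conjT]
      _ ≤ v ⬝ᵥ v := this
      _ = 1 := hvv
  -- Cauchy-Schwarz
  have key : v ⬝ᵥ ((Aᴴ * B) *ᵥ v) = (A *ᵥ v) ⬝ᵥ (B *ᵥ v) := by
    rw [← mulVec_mulVec, dot_mulVec_conjT]
  rw [key]
  have hcs : ((A *ᵥ v) ⬝ᵥ (B *ᵥ v)) ^ 2 ≤
      ((A *ᵥ v) ⬝ᵥ (A *ᵥ v)) * ((B *ᵥ v) ⬝ᵥ (B *ᵥ v)) := by
    simpa [dotProduct, pow_two, mul_mul_mul_comm] using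
      Finset.sum_mul_sq_le_sq_mul_sq Finset.univ (A *ᵥ v) (B *ᵥ v)
  have hnn : (0:ℝ) ≤ (B *ᵥ v) ⬝ᵥ (B *ᵥ v) := by
    simpa [dotProduct, pow_two] using Finset.sum_nonneg
      (fun i _ => mul_self_nonneg ((B *ᵥ v) i))
  have heignn : 0 ≤ hH.eigenvalues j := hP.eigenvalues_nonneg j
  calc (A *ᵥ v) ⬝ᵥ (B *ᵥ v) ≤ |(A *ᵥ v) ⬝ᵥ (B *ᵥ v)| := le_abs_self _
    _ = Real.sqrt (((A *ᵥ v) ⬝ᵥ (B *ᵥ v)) ^ 2) := (Real.sqrt_sq_eq_abs _).symm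
    _ ≤ Real.sqrt (hH.eigenvalues j * 1) := by
        apply Real.sqrt_le_sqrt
        rw [← hAv]
        exact hcs.trans (by nlinarith [hBv, hnn, hAv, heignn])
    _ = Real.sqrt (hH.eigenvalues j) := by rw [mul_one]


lemma nuclearNorm_exists_dual (A : Matrix m n ℝ) :
    ∃ B : Matrix m n ℝ, (1 - Bᴴ * B).PosSemidef ∧ (Aᴴ * B).trace = nuclearNorm A := by
  have hP := Matrix.posSemidef_conjTranspose_mul_self A
  have hH := hP.1
  set Vm : Matrix n n ℝ := (hH.eigenvectorUnitary : Matrix n n ℝ) with hVmdef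
  have hVV : Vm * Vmᴴ = 1 := by
    simpa [Matrix.star_eq_conjTranspose, hVmdef] using Unitary.coe_mul_star_self hH.eigenvectorUnitary
  have hVV' : Vmᴴ * Vm = 1 := by
    simpa [Matrix.star_eq_conjTranspose, hVmdef] using Unitary.coe_star_mul_self hH.eigenvectorUnitary
  set lam : n → ℝ := hH.eigenvalues with hlam
  have hspec : Aᴴ * A = Vm * diagonal lam * Vmᴴ := by
    have h := hH.spectral_theorem
    rw [Unitary.conjStarAlgAut_apply, Matrix.star_eq_conjTranspose] at h
    exact h
  set g : n → ℝ := fun j => if lam j = 0 then 0 else 1 / Real.sqrt (lam j) with hg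
  have h0 : ∀ X : Matrix n n ℝ, Aᴴ * (A * X) = Vm * (diagonal lam * (Vmᴴ * X)) := by
    intro X
    rw [← Matrix.mul_assoc, hspec]
    simp only [Matrix.mul_assoc]
  have h1 : ∀ X : Matrix n n ℝ, Vmᴴ * (Vm * X) = X := by
    intro X; rw [← Matrix.mul_assoc, hVV', Matrix.one_mul]
  have h3 : ∀ (a b : n → ℝ) (X : Matrix n n ℝ),
      diagonal a * (diagonal b * X) = diagonal (fun j => a j * b j) * X := by
    intro a b X; rw [← Matrix.mul_assoc, diagonal_mul_diagonal]
  have heignn : ∀ j, 0 ≤ lam j := fun j => hP.eigenvalues_nonneg j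
  refine ⟨A * (Vm * (diagonal g * Vmᴴ)), ?_, ?_⟩
  · have hWH : (Vm * (diagonal g * Vmᴴ))ᴴ = Vm * (diagonal g * Vmᴴ) := by
      simp [conjTranspose_mul, Matrix.mul_assoc, diagonal_conjTranspose]
    have hBB : (A * (Vm * (diagonal g * Vmᴴ)))ᴴ * (A * (Vm * (diagonal g * Vmᴴ)))
        = Vm * (diagonal (fun j => g j * lam j * g j) * Vmᴴ) := by
      rw [conjTranspose_mul, hWH]
      simp only [Matrix.mul_assoc]
      rw [h0, h1, h1, h3, h3]
    rw [hBB]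
    have hsub : (1 : Matrix n n ℝ) - Vm * (diagonal (fun j => g j * lam j * g j) * Vmᴴ)
        = Vm * ((1 - diagonal (fun j => g j * lam j * g j)) * Vmᴴ) := by
      rw [Matrix.sub_mul, Matrix.mul_sub, Matrix.one_mul, ← Matrix.mul_assoc, hVV]
    rw [hsub]
    have hd : (1 : Matrix n n ℝ) - diagonal (fun j => g j * lam j * g j)
        = diagonal (fun j => 1 - g j * lam j * g j) := by
      rw [← diagonal_one, diagonal_sub]
    rw [hd, ← Matrix.mul_assoc]
    apply Matrix.PosSemidef.mul_mul_conjTranspose_same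
    apply Matrix.PosSemidef.diagonal
    intro j
    by_cases hj : lam j = 0
    · simp [hg, hj]
    · have hpos : 0 < lam j := lt_of_le_of_ne (heignn j) (Ne.symm hj)
      have hss : Real.sqrt (lam j) * Real.sqrt (lam j) = lam j := Real.mul_self_sqrt hpos.le
      have hsne : Real.sqrt (lam j) ≠ 0 := by positivity
      have : g j * lam j * g j = 1 := by
        rw [hg]; simp only [hj, if_false]
        field_simp
        rw [Real.sq_sqrt hpos.le]
      simp [this]
  · have hAB : Aᴴ * (A * (Vm * (diagonal g * Vmᴴ)))
        = Vm * (diagonal (fun j => lam j * g j) * Vmᴴ) := by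
      rw [h0, h1, h3]
    rw [hAB, ← Matrix.mul_assoc, Matrix.trace_mul_cycle, hVV', Matrix.one_mul,
      Matrix.trace_diagonal, nuclearNorm_eq_sum]
    apply Finset.sum_congr rfl
    intro j _
    by_cases hj : lam j = 0
    · simp only [hg, hj, if_true, mul_zero]
      rw [show (Matrix.posSemidef_conjTranspose_mul_self A).1.eigenvalues j = lam j from rfl,
        hj, Real.sqrt_zero]
    · rw [hg]
      simp only [hj, if_false]
      rw [mul_one_div, Real.div_sqrt]

lemma nuclearNorm_add_le (A C : Matrix m n ℝ) :
    nuclearNorm (A + C) ≤ nuclearNorm A + nuclearNorm C := by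
  obtain ⟨B, hB, hBt⟩ := nuclearNorm_exists_dual (A + C)
  rw [← hBt]
  have h : (A + C)ᴴ * B = Aᴴ * B + Cᴴ * B := by rw [conjTranspose_add, Matrix.add_mul]
  rw [h, Matrix.trace_add]
  exact add_le_add (trace_le_nuclearNorm A B hB) (trace_le_nuclearNorm C B hB)

lemma sqrt_col_zero {M : Matrix n n ℝ} (hM : M.PosSemidef) (j : n) (h : M j j = 0) :
    ∀ k, hM.sqrt k j = 0 ∧ hM.sqrt j k = 0 := by
  have hsym : ∀ a b, hM.sqrt a b = hM.sqrt b a := by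
    intro a b
    have := hM.posSemidef_sqrt.1.apply b a
    simpa using this
  have hMS : M j j = ∑ k, hM.sqrt k j * hM.sqrt k j := by
    conv_lhs => rw [← hM.sqrt_mul_self]
    rw [Matrix.mul_apply]
    exact Finset.sum_congr rfl fun k _ => by rw [hsym j k]
  have hzero : ∀ k ∈ Finset.univ, hM.sqrt k j * hM.sqrt k j = 0 := by
    rw [← Finset.sum_eq_zero_iff_of_nonneg (fun k _ => mul_self_nonneg (hM.sqrt k j))]
    rw [← hMS, h]
  intro k
  have h1 : hM.sqrt k j = 0 := mul_self_eq_zero.mp (hzero k (Finset.mem_univ k))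
  exact ⟨h1, (hsym j k).trans h1⟩

lemma nuclearNorm_add_disjoint (A C : Matrix m n ℝ) (p : n → Prop) [DecidablePred p]
    (hA : ∀ i j, ¬ p j → A i j = 0) (hC : ∀ i j, p j → C i j = 0)
    (hcross : Aᴴ * C = 0) :
    nuclearNorm (A + C) = nuclearNorm A + nuclearNorm C := by
  have hP := Matrix.posSemidef_conjTranspose_mul_self A
  have hQ := Matrix.posSemidef_conjTranspose_mul_self C
  have hcross' : Cᴴ * A = 0 := by
    have := congrArg conjTranspose hcross
    simpa [conjTranspose_mul] using this
  have hsum : (A + C)ᴴ * (A + C) = Aᴴ * A + Cᴴ * C := by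
    rw [conjTranspose_add, Matrix.add_mul, Matrix.mul_add, Matrix.mul_add, hcross, hcross']
    simp
  have hPjj : ∀ j, ¬ p j → (Aᴴ * A) j j = 0 := by
    intro j hj
    rw [Matrix.mul_apply]
    apply Finset.sum_eq_zero
    intro i _
    simp [hA i j hj]
  have hQjj : ∀ j, p j → (Cᴴ * C) j j = 0 := by
    intro j hj
    rw [Matrix.mul_apply]
    apply Finset.sum_eq_zero
    intro i _
    simp [hC i j hj]
  have hSPzero := fun j hj => sqrt_col_zero hP j (hPjj j hj)
  have hSQzero := fun j hj => sqrt_col_zero hQ j (hQjj j hj)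
  have hmul1 : hP.sqrt * hQ.sqrt = 0 := by
    ext j k
    rw [Matrix.mul_apply]
    apply Finset.sum_eq_zero
    intro l _
    by_cases hl : p l
    · rw [(hSQzero l hl k).2, mul_zero]
    · rw [(hSPzero l hl j).1, zero_mul]
  have hmul2 : hQ.sqrt * hP.sqrt = 0 := by
    ext j k
    rw [Matrix.mul_apply]
    apply Finset.sum_eq_zero
    intro l _
    by_cases hl : p l
    · rw [(hSQzero l hl j).1, zero_mul]
    · rw [(hSPzero l hl k).2, mul_zero]
  have hPQ : (Aᴴ * A + Cᴴ * C).PosSemidef := hP.add hQ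
  have hsq : (hP.sqrt + hQ.sqrt) ^ 2 = Aᴴ * A + Cᴴ * C := by
    rw [pow_two, Matrix.add_mul, Matrix.mul_add, Matrix.mul_add, hP.sqrt_mul_self,
      hQ.sqrt_mul_self, hmul1, hmul2]
    simp
  have hpadd : (hP.sqrt + hQ.sqrt).PosSemidef := hP.posSemidef_sqrt.add hQ.posSemidef_sqrt
  have hkey : (Matrix.posSemidef_conjTranspose_mul_self (A + C)).sqrt
      = hP.sqrt + hQ.sqrt := by
    rw [sqrt_congr _ hPQ hsum]
    exact (hpadd.eq_sqrt_of_sq_eq hPQ hsq).symm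
  simp only [nuclearNorm_def]
  rw [hkey, Matrix.trace_add]

end helpers

theorem nuclear_norm_decomposition (m n r : ℕ)
    (Y ΔY : Matrix (Fin m) (Fin n) ℝ)
    (U : Matrix (Fin m) (Fin m) ℝ) (V : Matrix (Fin n) (Fin n) ℝ)
    (Sig : Matrix (Fin m) (Fin n) ℝ)
    (hU : Uᵀ * U = 1) (hU' : U * Uᵀ = 1)
    (hV : Vᵀ * V = 1) (hV' : V * Vᵀ = 1)
    (hSVD : Y = U * Sig * Vᵀ)
    (hrank : Y.rank = r)
    (hoff : ∀ (i : Fin m) (j : Fin n), (i : ℕ) ≠ (j : ℕ) → Sig i j = 0)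
    (htail : ∀ (i : Fin m) (j : Fin n), (i : ℕ) = (j : ℕ) → r ≤ (i : ℕ) → Sig i j = 0)
    (hpos : ∀ (i : Fin m) (j : Fin n), (i : ℕ) = (j : ℕ) → (i : ℕ) < r → Sig i j ≠ 0)
    (ΔY'' ΔY' : Matrix (Fin m) (Fin n) ℝ)
    (hΔY'' : ΔY'' = U * (Matrix.of fun (i : Fin m) (j : Fin n) =>
      if r ≤ (i : ℕ) ∧ r ≤ (j : ℕ) then (Uᵀ * ΔY * V) i j else 0) * Vᵀ)
    (hΔY' : ΔY' = ΔY - ΔY'') :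
    nuclearNorm Y - nuclearNorm (Y + ΔY) ≤ nuclearNorm ΔY' - nuclearNorm ΔY'' := by
  have hUc : Uᴴ = Uᵀ := conjTranspose_eq_transpose_of_trivial U
  have hVc : Vᴴ = Vᵀ := conjTranspose_eq_transpose_of_trivial V
  set G : Matrix (Fin m) (Fin n) ℝ := Matrix.of fun (i : Fin m) (j : Fin n) =>
      if r ≤ (i : ℕ) ∧ r ≤ (j : ℕ) then (Uᵀ * ΔY * V) i j else 0 with hG
  have hUV : ∀ X : Matrix (Fin m) (Fin n) ℝ, nuclearNorm (U * X * Vᵀ) = nuclearNorm X := by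
    intro X
    have h := nuclearNorm_unitary U V (by rw [hUc]; exact hU) (by rw [hVc]; exact hV)
      (by rw [hVc]; exact hV') X
    rwa [hVc] at h
  have h1 : nuclearNorm Y = nuclearNorm Sig := by rw [hSVD]; exact hUV Sig
  have h2 : nuclearNorm ΔY'' = nuclearNorm G := by rw [hΔY'']; exact hUV G
  have h3 : Y + ΔY'' = U * (Sig + G) * Vᵀ := by
    rw [hSVD, hΔY'', Matrix.mul_add, Matrix.add_mul]
  have h4 : nuclearNorm (Y + ΔY'') = nuclearNorm (Sig + G) := by rw [h3]; exact hUV _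
  have hSigsupp : ∀ (i : Fin m) (j : Fin n), ¬ ((j : ℕ) < r) → Sig i j = 0 := by
    intro i j hj
    by_cases hij : (i : ℕ) = (j : ℕ)
    · exact htail i j hij (by omega)
    · exact hoff i j hij
  have hGsupp : ∀ (i : Fin m) (j : Fin n), ((j : ℕ) < r) → G i j = 0 := by
    intro i j hj
    rw [hG]
    simp only [Matrix.of_apply, ite_eq_right_iff]
    intro h
    omega
  have hcross : Sigᴴ * G = 0 := by
    ext j k
    rw [Matrix.mul_apply]
    have hz : ∀ i : Fin m, Sigᴴ j i * G i k = 0 := by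
      intro i
      by_cases hi : (i : ℕ) < r
      · have hGz : G i k = 0 := by
          rw [hG]; simp only [Matrix.of_apply, ite_eq_right_iff]; intro h; omega
        rw [hGz, mul_zero]
      · have hSz : Sig i j = 0 := by
          by_cases hij : (i : ℕ) = (j : ℕ)
          · exact htail i j hij (by omega)
          · exact hoff i j hij
        rw [conjTranspose_apply, hSz]
        simp
    rw [Finset.sum_eq_zero fun i _ => hz i]
    simp
  have h5 : nuclearNorm (Sig + G) = nuclearNorm Sig + nuclearNorm G :=
    nuclearNorm_add_disjoint Sig G (fun j => (j : ℕ) < r) hSigsupp hGsupp hcross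
  have h6 : Y + ΔY'' = (Y + ΔY) + (-ΔY') := by
    rw [hΔY']
    abel
  have h7 : nuclearNorm (Y + ΔY'') ≤ nuclearNorm (Y + ΔY) + nuclearNorm ΔY' := by
    rw [h6]
    calc nuclearNorm ((Y + ΔY) + (-ΔY')) ≤ nuclearNorm (Y + ΔY) + nuclearNorm (-ΔY') :=
          nuclearNorm_add_le _ _
      _ = nuclearNorm (Y + ΔY) + nuclearNorm ΔY' := by rw [nuclearNorm_neg]
  linarith
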